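/- For every integer n ≥ 1, the polynomial C_n(X) ∈ ℤ[X] equals (X−1)² · Σ_{j=0}^{2n−2} a_{n,|j−(n−1)|} · X^j, where for i ≥ 0, a_{n,i} is the number of divisors d of n satisfying (i + √(2n+i²))/2 < d ≤ i + √(2n+i²). In particular, the coefficient of X^{j} in the quotient C_n(X)/(X−1)² is the divisor count a_{n,|j−(n−1)|}, and a_{n,n−1} = a_{n,n−2} = 1 for all n ≥ 2. -/

import Mathlib

/-- The coefficients `c_{n,i}` from the paper. -/
def cCoeff (n i : ℕ) : ℤ :=
  if i = 0 then
    ∑ k ∈ Finset.Icc 1 (2 * n), if 2 * n = k * (k + 1) then 2 * (-1 : ℤ) ^ k else 0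
  else
    ∑ k ∈ Finset.Icc 1 (2 * n),
      ((if 2 * n = k * (k + 2 * i + 1) then (-1 : ℤ) ^ k else 0) +
        (if 2 * n = k * (k + 2 * i - 1) then (-1 : ℤ) ^ (k - 1) else 0))

/-- The polynomial `C_n(X) = c_{n,0} X^n + ∑_{i=1}^n c_{n,i} (X^{n+i} + X^{n-i}) ∈ ℤ[X]`. -/
noncomputable def Cpoly (n : ℕ) : Polynomial ℤ :=
  Polynomial.C (cCoeff n 0) * Polynomial.X ^ n +
    ∑ i ∈ Finset.Icc 1 n,
      Polynomial.C (cCoeff n i) * (Polynomial.X ^ (n + i) + Polynomial.X ^ (n - i))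

open scoped Classical in
/-- `a_{n,i}` is the number of divisors `d` of `n` with
`(i + √(2n+i²))/2 < d ≤ i + √(2n+i²)`. -/
noncomputable def aCoeff (n i : ℕ) : ℕ :=
  (n.divisors.filter fun d =>
    ((i : ℝ) + Real.sqrt (2 * n + i ^ 2)) / 2 < (d : ℝ) ∧
      (d : ℝ) ≤ (i : ℝ) + Real.sqrt (2 * n + i ^ 2)).card


def aSet (n i : ℕ) : Finset ℕ :=
  n.divisors.filter fun d => 2*n + 4*d*i < 4*d^2 ∧ d^2 ≤ 2*n + 2*d*i

def A (n i : ℕ) : ℕ := (aSet n i).card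

def fset (n m : ℕ) : Finset ℕ := n.divisors.filter fun d => d^2 = 2*n + m*d
def gset (n m : ℕ) : Finset ℕ := n.divisors.filter fun d => 2*d^2 = n + m*d

theorem aCoeff_eq (n i : ℕ) : aCoeff n i = A n i := by
  classical
  unfold aCoeff A aSet
  have himg : (do let a ← n.divisors; pure ((a:ℕ):ℝ) : Finset ℝ) =
      n.divisors.image (fun a : ℕ => (a:ℝ)) := by
    ext x
    simp [Finset.mem_image]
  rw [himg]
  rw [Finset.filter_image,
    Finset.card_image_of_injective _ (fun a b h => by exact_mod_cast h)]
  apply congrArg Finset.card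
  apply Finset.filter_congr
  intro d hd
  rw [Nat.mem_divisors] at hd
  have hd1 : 1 ≤ d := Nat.pos_of_dvd_of_pos hd.1 (Nat.pos_of_ne_zero hd.2)
  set s := Real.sqrt (2 * n + i ^ 2) with hs
  have hX : (0:ℝ) ≤ 2 * n + i ^ 2 := by positivity
  have hsq : s ^ 2 = 2 * n + i ^ 2 := Real.sq_sqrt hX
  have hsnn : (0:ℝ) ≤ s := Real.sqrt_nonneg _
  have hge : (i:ℝ) ≤ s := by nlinarith [sq_nonneg ((i:ℝ) - s)]
  constructor
  · rintro ⟨h1, h2⟩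
    constructor
    · -- 2n + 4di < 4d²
      have h1' : s < 2*d - i := by linarith
      have : (2*(d:ℝ) - i) ^ 2 > 2*n + i^2 := by nlinarith
      have : 2*(n:ℝ) + 4*d*i < 4*(d:ℝ)^2 := by nlinarith
      exact_mod_cast this
    · -- d² ≤ 2n + 2di
      by_cases hdi : d ≤ i
      · have : d^2 ≤ 2*d*i := by nlinarith
        omega
      · push_neg at hdi
        have h2' : (d:ℝ) - i ≤ s := by linarith
        have hdi' : (0:ℝ) ≤ (d:ℝ) - i := by
          have : (i:ℝ) ≤ d := by exact_mod_cast hdi.le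
          linarith
        have : ((d:ℝ) - i)^2 ≤ 2*n + i^2 := by nlinarith
        have : (d:ℝ)^2 ≤ 2*n + 2*d*i := by nlinarith
        exact_mod_cast this
  · rintro ⟨h1, h2⟩
    have h1' : 2*(n:ℝ) + 4*d*i < 4*(d:ℝ)^2 := by exact_mod_cast h1
    have h2' : (d:ℝ)^2 ≤ 2*n + 2*d*i := by exact_mod_cast h2
    have hid : (i:ℝ) < 2*d := by nlinarith
    constructor
    · have : s < 2*(d:ℝ) - i := by
        nlinarith [sq_nonneg (s - (2*(d:ℝ) - i)), sq_nonneg (s + (2*(d:ℝ) - i))]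
      linarith
    · have : (d:ℝ) - i ≤ s := by
        nlinarith [sq_nonneg (s - ((d:ℝ) - i)), sq_nonneg (s + ((d:ℝ) - i))]
      linarith

theorem A_eq_zero (n i : ℕ) (h : n ≤ i) : A n i = 0 := by
  unfold A aSet
  rw [Finset.card_eq_zero, Finset.filter_eq_empty_iff]
  intro d hd
  rw [Nat.mem_divisors] at hd
  have hdn : d ≤ n := Nat.le_of_dvd (Nat.pos_of_ne_zero hd.2) hd.1
  have : 4*d^2 ≤ 4*d*i := by nlinarith
  omega

lemma cond_iff (d e i : ℕ) (hd : 1 ≤ d) :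
    (2*(d*e) + 4*d*i < 4*d^2 ∧ d^2 ≤ 2*(d*e) + 2*d*i) ↔ (e + 2*i < 2*d ∧ d ≤ 2*e + 2*i) := by
  constructor
  · rintro ⟨h1, h2⟩
    constructor
    · have : d*(e + 2*i) < d*(2*d) := by nlinarith
      exact Nat.lt_of_mul_lt_mul_left this
    · have : d*d ≤ d*(2*e + 2*i) := by nlinarith
      exact Nat.le_of_mul_le_mul_left this hd
  · rintro ⟨h1, h2⟩
    constructor
    · have : d*(e + 2*i) < d*(2*d) := (Nat.mul_lt_mul_left hd).mpr h1
      nlinarith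
    · have : d*d ≤ d*(2*e + 2*i) := Nat.mul_le_mul_left d h2
      nlinarith

lemma eq_iff (d e c : ℕ) (hd : 1 ≤ d) : d^2 = 2*(d*e) + c*d ↔ d = 2*e + c := by
  constructor
  · intro h
    exact Nat.eq_of_mul_eq_mul_left hd (show d*d = d*(2*e+c) from by nlinarith)
  · intro h
    nlinarith
lemma eq_iff2 (d e c : ℕ) (hd : 1 ≤ d) : 2*d^2 = d*e + c*d ↔ 2*d = e + c := by
  constructor
  · intro h
    exact Nat.eq_of_mul_eq_mul_left hd (show d*(2*d) = d*(e+c) from by nlinarith)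
  · intro h
    nlinarith

lemma eDiv (n d : ℕ) (hn : 1 ≤ n) (hdvd : d ∣ n) :
    ∃ e, n = d * e ∧ 1 ≤ e ∧ 1 ≤ d := by
  obtain ⟨e, he⟩ := hdvd
  have hd1 : 1 ≤ d := by
    rcases Nat.eq_zero_or_pos d with h | h
    · exfalso; rw [h] at he; omega
    · exact h
  have he1 : 1 ≤ e := by
    rcases Nat.eq_zero_or_pos e with h | h
    · exfalso; rw [h, Nat.mul_zero] at he; omega
    · exact h
  exact ⟨e, he, he1, hd1⟩

lemma sdiff_TS (n i : ℕ) (hn : 1 ≤ n) :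
    aSet n (i+1) \ aSet n i = fset n (2*i+1) ∪ fset n (2*i+2) := by
  ext d
  simp only [aSet, fset, Finset.mem_sdiff, Finset.mem_filter, Finset.mem_union,
    Nat.mem_divisors]
  constructor
  · rintro ⟨⟨⟨hdvd, hne⟩, hT⟩, hS⟩
    obtain ⟨e, he, he1, hd1⟩ := eDiv n d hn hdvd
    rw [he] at hT
    rw [cond_iff d e (i+1) hd1] at hT
    have hS' : ¬(e + 2*i < 2*d ∧ d ≤ 2*e + 2*i) := by
      intro hc
      exact hS ⟨⟨hdvd, hne⟩, by rw [he, cond_iff d e i hd1]; exact hc⟩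
    have : d = 2*e + (2*i+1) ∨ d = 2*e + (2*i+2) := by omega
    rcases this with h | h
    · exact Or.inl ⟨⟨hdvd, hne⟩, by rw [he, eq_iff d e (2*i+1) hd1]; omega⟩
    · exact Or.inr ⟨⟨hdvd, hne⟩, by rw [he, eq_iff d e (2*i+2) hd1]; omega⟩
  · intro h
    have hdvd : d ∣ n ∧ n ≠ 0 := by rcases h with ⟨h, _⟩ | ⟨h, _⟩ <;> exact h
    obtain ⟨e, he, he1, hd1⟩ := eDiv n d hn hdvd.1
    have hd' : d = 2*e + (2*i+1) ∨ d = 2*e + (2*i+2) := by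
      rcases h with ⟨_, h⟩ | ⟨_, h⟩
      · rw [he, eq_iff d e (2*i+1) hd1] at h; omega
      · rw [he, eq_iff d e (2*i+2) hd1] at h; omega
    refine ⟨⟨hdvd, ?_⟩, ?_⟩
    · rw [he, cond_iff d e (i+1) hd1]; omega
    · rintro ⟨-, hc⟩
      rw [he, cond_iff d e i hd1] at hc
      omega

lemma sdiff_ST (n i : ℕ) (hn : 1 ≤ n) :
    aSet n i \ aSet n (i+1) = gset n (2*i+1) ∪ gset n (2*i+2) := by
  ext d
  simp only [aSet, gset, Finset.mem_sdiff, Finset.mem_filter, Finset.mem_union,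
    Nat.mem_divisors]
  constructor
  · rintro ⟨⟨⟨hdvd, hne⟩, hS⟩, hT⟩
    obtain ⟨e, he, he1, hd1⟩ := eDiv n d hn hdvd
    rw [he] at hS
    rw [cond_iff d e i hd1] at hS
    have hT' : ¬(e + 2*(i+1) < 2*d ∧ d ≤ 2*e + 2*(i+1)) := by
      intro hc
      exact hT ⟨⟨hdvd, hne⟩, by rw [he, cond_iff d e (i+1) hd1]; exact hc⟩
    have : 2*d = e + (2*i+1) ∨ 2*d = e + (2*i+2) := by omega
    rcases this with h | h
    · exact Or.inl ⟨⟨hdvd, hne⟩, by rw [he, eq_iff2 d e (2*i+1) hd1]; omega⟩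
    · exact Or.inr ⟨⟨hdvd, hne⟩, by rw [he, eq_iff2 d e (2*i+2) hd1]; omega⟩
  · intro h
    have hdvd : d ∣ n ∧ n ≠ 0 := by rcases h with ⟨h, _⟩ | ⟨h, _⟩ <;> exact h
    obtain ⟨e, he, he1, hd1⟩ := eDiv n d hn hdvd.1
    have hd' : 2*d = e + (2*i+1) ∨ 2*d = e + (2*i+2) := by
      rcases h with ⟨_, h⟩ | ⟨_, h⟩
      · rw [he, eq_iff2 d e (2*i+1) hd1] at h; omega
      · rw [he, eq_iff2 d e (2*i+2) hd1] at h; omega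
    refine ⟨⟨hdvd, ?_⟩, ?_⟩
    · rw [he, cond_iff d e i hd1]; omega
    · rintro ⟨-, hc⟩
      rw [he, cond_iff d e (i+1) hd1] at hc
      omega

lemma fset_disj (n i : ℕ) : Disjoint (fset n (2*i+1)) (fset n (2*i+2)) := by
  rw [Finset.disjoint_left]
  intro d h1 h2
  simp only [fset, Finset.mem_filter, Nat.mem_divisors] at h1 h2
  obtain ⟨⟨hdvd, hne⟩, e1⟩ := h1
  obtain ⟨-, e2⟩ := h2
  have hd1 : 1 ≤ d := Nat.pos_of_dvd_of_pos hdvd (Nat.pos_of_ne_zero hne)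
  nlinarith

lemma gset_disj (n i : ℕ) : Disjoint (gset n (2*i+1)) (gset n (2*i+2)) := by
  rw [Finset.disjoint_left]
  intro d h1 h2
  simp only [gset, Finset.mem_filter, Nat.mem_divisors] at h1 h2
  obtain ⟨⟨hdvd, hne⟩, e1⟩ := h1
  obtain ⟨-, e2⟩ := h2
  have hd1 : 1 ≤ d := Nat.pos_of_dvd_of_pos hdvd (Nat.pos_of_ne_zero hne)
  nlinarith

theorem Astep (n i : ℕ) (hn : 1 ≤ n) :
    (A n (i+1) : ℤ) - A n i =
      (((fset n (2*i+1)).card : ℤ) - (gset n (2*i+1)).card)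
      + (((fset n (2*i+2)).card : ℤ) - (gset n (2*i+2)).card) := by
  have h1 := Finset.card_inter_add_card_sdiff (aSet n (i+1)) (aSet n i)
  have h2 := Finset.card_inter_add_card_sdiff (aSet n i) (aSet n (i+1))
  rw [Finset.inter_comm] at h2
  rw [sdiff_TS n i hn] at h1
  rw [sdiff_ST n i hn] at h2
  rw [Finset.card_union_of_disjoint (fset_disj n i)] at h1
  rw [Finset.card_union_of_disjoint (gset_disj n i)] at h2
  unfold A
  omega


theorem fg_even (n s : ℕ) : (fset n (2*s)).card = (gset n (2*s)).card := by
  unfold fset gset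
  apply Finset.card_nbij' (fun u => u / 2) (fun d => 2 * d)
  · intro u hu
    simp only [Finset.mem_coe, Finset.mem_filter, Nat.mem_divisors] at hu ⊢
    obtain ⟨⟨hdvd, hne⟩, heq⟩ := hu
    have hn1 : 1 ≤ n := Nat.pos_of_ne_zero hne
    have hu1 : 1 ≤ u := Nat.pos_of_dvd_of_pos hdvd hn1
    have heven : Even u := by
      have h2 : Even (u^2) := ⟨n + s*u, by nlinarith⟩
      exact (Nat.even_pow.mp h2).1
    obtain ⟨t, rfl⟩ : ∃ t, u = 2*t := by
      obtain ⟨t, ht⟩ := heven; exact ⟨t, by omega⟩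
    rw [show (2*t)/2 = t from by omega]
    have ht0 : 1 ≤ t := by omega
    have ht : 2*t^2 = n + 2*s*t := by nlinarith
    have hdvd' : t ∣ n := by
      have h1 : t ∣ n + 2*s*t := ⟨2*t, by nlinarith⟩
      have h2 : t ∣ 2*s*t := ⟨2*s, by ring⟩
      have := Nat.dvd_sub h1 h2
      simpa using this
    exact ⟨⟨hdvd', hne⟩, ht⟩
  · intro d hd
    simp only [Finset.mem_coe, Finset.mem_filter, Nat.mem_divisors] at hd ⊢
    obtain ⟨⟨hdvd, hne⟩, heq⟩ := hd
    have hn1 : 1 ≤ n := Nat.pos_of_ne_zero hne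
    have hd1 : 1 ≤ d := Nat.pos_of_dvd_of_pos hdvd hn1
    have hdvd' : 2*d ∣ n := by
      have h1 : 2*d ∣ n + 2*s*d := ⟨d, by nlinarith⟩
      have h2 : 2*d ∣ 2*s*d := ⟨s, by ring⟩
      have := Nat.dvd_sub h1 h2
      simpa using this
    exact ⟨⟨hdvd', hne⟩, by nlinarith⟩
  · intro u hu
    simp only [Finset.mem_coe, Finset.mem_filter, Nat.mem_divisors] at hu
    obtain ⟨⟨hdvd, hne⟩, heq⟩ := hu
    have hn1 : 1 ≤ n := Nat.pos_of_ne_zero hne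
    have hu1 : 1 ≤ u := Nat.pos_of_dvd_of_pos hdvd hn1
    have heven : Even u := by
      have h2 : Even (u^2) := ⟨n + s*u, by nlinarith⟩
      exact (Nat.even_pow.mp h2).1
    obtain ⟨t, rfl⟩ := heven
    beta_reduce
    omega
  · intro d _
    beta_reduce
    omega

theorem card_even_eq_fset (n m : ℕ) (hn : 1 ≤ n) :
    (((Finset.Icc 1 (2*n)).filter (fun k => 2*n = k*(k+m))).filter (fun k => Even k)).card
      = (fset n m).card := by
  unfold fset
  apply Finset.card_nbij' (fun k => k + m) (fun d => d - m)
  · intro k hk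
    simp only [Finset.mem_coe, Finset.mem_filter, Finset.mem_Icc, Nat.mem_divisors] at hk ⊢
    obtain ⟨⟨⟨hk1, hk2⟩, heq⟩, hkev⟩ := hk
    obtain ⟨t, rfl⟩ : ∃ t, k = 2*t := by
      obtain ⟨t, ht⟩ := hkev; exact ⟨t, by omega⟩
    refine ⟨⟨⟨t, ?_⟩, by omega⟩, by nlinarith⟩
    have : 2*n = 2*((2*t+m)*t) := by rw [heq]; ring
    omega
  · intro d hd
    simp only [Finset.mem_coe, Finset.mem_filter, Finset.mem_Icc, Nat.mem_divisors] at hd ⊢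
    obtain ⟨⟨hdvd, hne⟩, heq⟩ := hd
    have hd1 : 1 ≤ d := Nat.pos_of_dvd_of_pos hdvd hn
    obtain ⟨e, he⟩ := hdvd
    have he1 : 1 ≤ e := by
      rcases Nat.eq_zero_or_pos e with h | h
      · exfalso; rw [h, Nat.mul_zero] at he; omega
      · exact h
    have hdm : d = 2*e + m := by
      have : d*d = d*(2*e+m) := by nlinarith
      exact Nat.eq_of_mul_eq_mul_left hd1 this
    have hen : e ≤ d*e := Nat.le_mul_of_pos_left e hd1
    have hkey : 2*n = (d - m) * ((d - m) + m) := by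
      rw [show d - m = 2*e from by omega, show 2*e + m = d from by omega, he]; ring
    refine ⟨⟨⟨by omega, by omega⟩, hkey⟩, ?_⟩
    rw [show d - m = 2*e from by omega]
    exact even_two_mul e
  · intro k hk
    simp only [Finset.mem_coe, Finset.mem_filter, Finset.mem_Icc] at hk
    beta_reduce
    omega
  · intro d hd
    simp only [Finset.mem_coe, Finset.mem_filter, Nat.mem_divisors] at hd
    obtain ⟨⟨hdvd, hne⟩, heq⟩ := hd
    have hd1 : 1 ≤ d := Nat.pos_of_dvd_of_pos hdvd hn
    have : m < d := by nlinarith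
    beta_reduce
    omega

theorem card_odd_eq_gset (n m : ℕ) (hn : 1 ≤ n) (hm : Odd m) :
    (((Finset.Icc 1 (2*n)).filter (fun k => 2*n = k*(k+m))).filter (fun k => ¬ Even k)).card
      = (gset n m).card := by
  unfold gset
  apply Finset.card_nbij' (fun k => (k + m) / 2) (fun d => 2*d - m)
  · intro k hk
    simp only [Finset.mem_coe, Finset.mem_filter, Finset.mem_Icc, Nat.mem_divisors] at hk ⊢
    obtain ⟨⟨⟨hk1, hk2⟩, heq⟩, hkodd⟩ := hk
    rw [Nat.not_even_iff_odd] at hkodd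
    obtain ⟨a, ha⟩ := hkodd
    obtain ⟨b, hb⟩ := hm
    obtain ⟨t, ht⟩ : ∃ t, k + m = 2*t := ⟨a + b + 1, by omega⟩
    have ht1 : 1 ≤ t := by omega
    rw [ht, show (2*t)/2 = t from by omega]
    have hnk : 2*n = 2*(t*k) := by rw [heq, ht]; ring
    have hnk' : n = t*k := by omega
    have h2t : 2*t = k + m := by omega
    refine ⟨⟨⟨k, hnk'⟩, by omega⟩, by nlinarith⟩
  · intro d hd
    simp only [Finset.mem_coe, Finset.mem_filter, Finset.mem_Icc, Nat.mem_divisors] at hd ⊢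
    obtain ⟨⟨hdvd, hne⟩, heq⟩ := hd
    have hd1 : 1 ≤ d := Nat.pos_of_dvd_of_pos hdvd hn
    have hdn : d ≤ n := Nat.le_of_dvd hn hdvd
    have hmd : m < 2*d := by nlinarith
    have hkey : 2*n = (2*d - m) * ((2*d - m) + m) := by
      rw [show (2*d - m) + m = 2*d from by omega]
      obtain ⟨c, hc⟩ : ∃ c, 2*d - m = c := ⟨_, rfl⟩
      have hc' : 2*d = c + m := by omega
      rw [hc]
      nlinarith
    refine ⟨⟨⟨by omega, by omega⟩, hkey⟩, ?_⟩
    rw [Nat.not_even_iff_odd]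
    obtain ⟨b, hb⟩ := hm
    exact ⟨d - b - 1, by omega⟩
  · intro k hk
    simp only [Finset.mem_coe, Finset.mem_filter, Finset.mem_Icc] at hk
    obtain ⟨⟨⟨hk1, hk2⟩, heq⟩, hkodd⟩ := hk
    rw [Nat.not_even_iff_odd] at hkodd
    obtain ⟨a, ha⟩ := hkodd
    obtain ⟨b, hb⟩ := hm
    beta_reduce
    omega
  · intro d hd
    simp only [Finset.mem_coe, Finset.mem_filter, Nat.mem_divisors] at hd
    obtain ⟨⟨hdvd, hne⟩, heq⟩ := hd
    have hd1 : 1 ≤ d := Nat.pos_of_dvd_of_pos hdvd hn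
    have hmd : m < 2*d := by nlinarith
    beta_reduce
    omega

theorem sum_parity (n m : ℕ) (hn : 1 ≤ n) (hm : Odd m) :
    (∑ k ∈ Finset.Icc 1 (2*n), if 2*n = k*(k+m) then ((-1:ℤ))^k else 0)
      = ((fset n m).card : ℤ) - (gset n m).card := by
  classical
  rw [← Finset.sum_filter]
  rw [← Finset.sum_filter_add_sum_filter_not ((Finset.Icc 1 (2*n)).filter
      (fun k => 2*n = k*(k+m))) (fun k => Even k)]
  rw [← card_even_eq_fset n m hn, ← card_odd_eq_gset n m hn hm]
  rw [Finset.sum_congr rfl (fun k hk => show ((-1:ℤ))^k = 1 by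
      simp only [Finset.mem_filter] at hk
      exact Even.neg_one_pow hk.2)]
  rw [Finset.sum_congr rfl (fun k hk => show ((-1:ℤ))^k = -1 by
      simp only [Finset.mem_filter, Nat.not_even_iff_odd] at hk
      exact Odd.neg_one_pow hk.2)]
  simp [Finset.sum_const]
  ring

theorem cCoeff_zero (n : ℕ) (hn : 1 ≤ n) :
    cCoeff n 0 = 2*(((fset n 1).card : ℤ) - (gset n 1).card) := by
  unfold cCoeff
  rw [if_pos rfl, ← sum_parity n 1 hn odd_one, Finset.mul_sum]
  apply Finset.sum_congr rfl
  intro k _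
  split <;> ring

theorem cCoeff_pos (n i : ℕ) (hn : 1 ≤ n) :
    cCoeff n (i+1) = ((((fset n (2*i+3)).card : ℤ) - (gset n (2*i+3)).card)
      - (((fset n (2*i+1)).card : ℤ) - (gset n (2*i+1)).card)) := by
  unfold cCoeff
  rw [if_neg (by omega)]
  rw [Finset.sum_add_distrib]
  have h1 : (∑ k ∈ Finset.Icc 1 (2*n), if 2 * n = k * (k + 2 * (i+1) + 1)
      then (-1 : ℤ) ^ k else 0) = ((fset n (2*i+3)).card : ℤ) - (gset n (2*i+3)).card := by
    rw [← sum_parity n (2*i+3) hn (by exact ⟨i+1, by ring⟩)]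
    apply Finset.sum_congr rfl
    intro k _
    rw [show k + 2*(i+1) + 1 = k + (2*i+3) from by ring]
  have h2 : (∑ k ∈ Finset.Icc 1 (2*n), if 2 * n = k * (k + 2 * (i+1) - 1)
      then (-1 : ℤ) ^ (k-1) else 0)
      = -(((fset n (2*i+1)).card : ℤ) - (gset n (2*i+1)).card) := by
    rw [← sum_parity n (2*i+1) hn ⟨i, by ring⟩, ← Finset.sum_neg_distrib]
    apply Finset.sum_congr rfl
    intro k hk
    rw [Finset.mem_Icc] at hk
    rw [show k + 2*(i+1) - 1 = k + (2*i+1) from by omega]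
    split
    · rw [show k = (k-1)+1 from by omega, pow_succ]
      ring_nf
      rw [show 1 + (k-1) - 1 = k - 1 from by omega]
    · ring
  rw [h1, h2]
  ring

theorem key_zero (n : ℕ) (hn : 1 ≤ n) : cCoeff n 0 = 2*((A n 1 : ℤ) - A n 0) := by
  have h := Astep n 0 hn
  rw [show (2*0+2 : ℕ) = 2*1 from rfl] at h
  have e : ((fset n (2*1)).card : ℤ) = (gset n (2*1)).card := by
    exact_mod_cast congrArg (fun x : ℕ => (x : ℤ)) (fg_even n 1)
  rw [cCoeff_zero n hn]
  linarith

theorem key_succ (n i : ℕ) (hn : 1 ≤ n) :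
    cCoeff n (i+1) = ((A n (i+2) : ℤ)) - 2*(A n (i+1)) + A n i := by
  have h1 := Astep n (i+1) hn
  have h2 := Astep n i hn
  have hc := cCoeff_pos n i hn
  rw [show i+1+1 = i+2 from rfl, show 2*(i+1)+1 = 2*i+3 from by ring,
    show 2*(i+1)+2 = 2*(i+2) from by ring] at h1
  rw [show 2*i+2 = 2*(i+1) from by ring] at h2
  have e1 : ((fset n (2*(i+2))).card : ℤ) = (gset n (2*(i+2))).card := by
    exact_mod_cast congrArg (fun x : ℕ => (x : ℤ)) (fg_even n (i+2))
  have e2 : ((fset n (2*(i+1))).card : ℤ) = (gset n (2*(i+1))).card := by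
    exact_mod_cast congrArg (fun x : ℕ => (x : ℤ)) (fg_even n (i+1))
  linarith

noncomputable def B (n : ℕ) : Polynomial ℤ :=
  ∑ j ∈ Finset.range (2*n-1),
    Polynomial.C ((A n ((j:ℤ) - ((n:ℤ) - 1)).natAbs : ℤ)) * Polynomial.X ^ j

lemma coeff_B (n : ℕ) (m : ℕ) :
    (B n).coeff m = if m < 2*n-1 then (A n ((m:ℤ) - ((n:ℤ) - 1)).natAbs : ℤ) else 0 := by
  unfold B
  rw [Polynomial.finset_sum_coeff]
  simp only [Polynomial.coeff_C_mul, Polynomial.coeff_X_pow, mul_ite, mul_one, mul_zero]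
  rw [Finset.sum_ite_eq (Finset.range (2*n-1)) m
    (fun j => (A n ((j:ℤ) - ((n:ℤ) - 1)).natAbs : ℤ))]
  simp [Finset.mem_range]

lemma coeff_rhs (m : ℕ) (p : Polynomial ℤ) :
    ((Polynomial.X - 1)^2 * p).coeff m =
      (if 2 ≤ m then p.coeff (m-2) else 0) - 2*(if 1 ≤ m then p.coeff (m-1) else 0)
        + p.coeff m := by
  have h : (Polynomial.X - 1)^2 * p = p * Polynomial.X^2 - (p * Polynomial.X^1
      + p * Polynomial.X^1) + p := by ring
  rw [h, Polynomial.coeff_add, Polynomial.coeff_sub, Polynomial.coeff_add,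
    Polynomial.coeff_mul_X_pow', Polynomial.coeff_mul_X_pow']
  ring

lemma coeff_Cpoly (n : ℕ) (hn : 1 ≤ n) (m : ℕ) :
    (Cpoly n).coeff m = if m ≤ 2*n then cCoeff n ((m:ℤ) - n).natAbs else 0 := by
  unfold Cpoly
  rw [Polynomial.coeff_add, Polynomial.coeff_C_mul, Polynomial.coeff_X_pow,
    Polynomial.finset_sum_coeff]
  simp only [Polynomial.coeff_C_mul, Polynomial.coeff_add, Polynomial.coeff_X_pow]
  rcases lt_trichotomy m n with h | h | h
  · rw [Finset.sum_eq_single (n - m)]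
    · rw [if_neg (by omega), if_neg (by omega), if_pos (by omega),
        if_pos (show m ≤ 2*n from by omega),
        show ((m:ℤ) - n).natAbs = n - m from by omega]
      ring
    · intro i hi hne
      rw [Finset.mem_Icc] at hi
      rw [if_neg (by omega), if_neg (by omega)]
      ring
    · intro hni
      rw [Finset.mem_Icc] at hni
      omega
  · subst h
    rw [Finset.sum_eq_zero, if_pos rfl, if_pos (by omega),
      show ((m:ℤ) - m).natAbs = 0 from by omega]
    · ring
    · intro i hi
      rw [Finset.mem_Icc] at hi
      rw [if_neg (by omega), if_neg (by omega)]
      ring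
  · by_cases hm : m ≤ 2*n
    · rw [Finset.sum_eq_single (m - n)]
      · rw [if_neg (by omega), if_pos (by omega), if_neg (by omega), if_pos hm,
          show ((m:ℤ) - n).natAbs = m - n from by omega]
        ring
      · intro i hi hne
        rw [Finset.mem_Icc] at hi
        rw [if_neg (by omega), if_neg (by omega)]
        ring
      · intro hni
        rw [Finset.mem_Icc] at hni
        omega
    · rw [Finset.sum_eq_zero, if_neg (by omega), if_neg hm]
      · ring
      · intro i hi
        rw [Finset.mem_Icc] at hi
        rw [if_neg (by omega), if_neg (by omega)]
        ring

theorem main_poly (n : ℕ) (hn : 1 ≤ n) : Cpoly n = (Polynomial.X - 1)^2 * B n := by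
  have hz : ∀ j : ℕ, n ≤ j → (A n j : ℤ) = 0 := fun j hj => by
    rw [A_eq_zero n j hj]; rfl
  apply Polynomial.ext
  intro m
  rw [coeff_Cpoly n hn m, coeff_rhs, coeff_B, coeff_B, coeff_B]
  by_cases h2n : m ≤ 2*n
  swap
  · rw [if_neg h2n, if_pos (show 2 ≤ m from by omega), if_neg (show ¬ (m-2 < 2*n-1) from by omega),
      if_pos (show 1 ≤ m from by omega), if_neg (show ¬ (m-1 < 2*n-1) from by omega),
      if_neg (show ¬ (m < 2*n-1) from by omega)]
    ring
  rcases Nat.lt_or_ge m 1 with hm | hm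
  · -- m = 0
    rw [if_pos h2n,
      show ((m:ℤ) - n).natAbs = (n-1)+1 from by omega,
      key_succ n (n-1) hn,
      if_neg (show ¬ 2 ≤ m from by omega), if_neg (show ¬ 1 ≤ m from by omega),
      if_pos (show m < 2*n-1 from by omega),
      show ((m:ℤ) - ((n:ℤ)-1)).natAbs = n-1 from by omega,
      hz (n-1+2) (by omega), hz (n-1+1) (by omega)]
    try ring
  rcases Nat.lt_or_ge m 2 with hm1 | hm2
  · -- m = 1
    rcases Nat.lt_or_ge n 2 with hn1 | hn2
    · -- n = 1
      rw [if_pos h2n,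
        show ((m:ℤ) - n).natAbs = 0 from by omega,
        key_zero n hn,
        if_neg (show ¬ 2 ≤ m from by omega), if_pos hm,
        if_pos (show m - 1 < 2*n-1 from by omega),
        show (((m-1 : ℕ):ℤ) - ((n:ℤ)-1)).natAbs = 0 from by omega,
        if_neg (show ¬ (m < 2*n-1) from by omega),
        hz 1 (by omega)]
      try ring
    · -- n ≥ 2
      rw [if_pos h2n,
        show ((m:ℤ) - n).natAbs = (n-2)+1 from by omega,
        key_succ n (n-2) hn,
        if_neg (show ¬ 2 ≤ m from by omega), if_pos hm,
        if_pos (show m - 1 < 2*n-1 from by omega),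
        show (((m-1 : ℕ):ℤ) - ((n:ℤ)-1)).natAbs = (n-2)+1 from by omega,
        if_pos (show m < 2*n-1 from by omega),
        show ((m:ℤ) - ((n:ℤ)-1)).natAbs = n-2 from by omega,
        hz (n-2+2) (by omega)]
      try ring
  rcases lt_trichotomy m n with h | h | h
  · -- 2 ≤ m < n
    rw [if_pos h2n,
      show ((m:ℤ) - n).natAbs = (n-m-1)+1 from by omega,
      key_succ n (n-m-1) hn,
      if_pos hm2,
      if_pos (show m - 2 < 2*n-1 from by omega),
      show (((m-2 : ℕ):ℤ) - ((n:ℤ)-1)).natAbs = (n-m-1)+2 from by omega,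
      if_pos hm,
      if_pos (show m - 1 < 2*n-1 from by omega),
      show (((m-1 : ℕ):ℤ) - ((n:ℤ)-1)).natAbs = (n-m-1)+1 from by omega,
      if_pos (show m < 2*n-1 from by omega),
      show ((m:ℤ) - ((n:ℤ)-1)).natAbs = n-m-1 from by omega]
    try ring
  · -- m = n, n ≥ 2
    rw [if_pos h2n,
      show ((m:ℤ) - n).natAbs = 0 from by omega,
      key_zero n hn,
      if_pos hm2,
      if_pos (show m - 2 < 2*n-1 from by omega),
      show (((m-2 : ℕ):ℤ) - ((n:ℤ)-1)).natAbs = 1 from by omega,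
      if_pos hm,
      if_pos (show m - 1 < 2*n-1 from by omega),
      show (((m-1 : ℕ):ℤ) - ((n:ℤ)-1)).natAbs = 0 from by omega,
      if_pos (show m < 2*n-1 from by omega),
      show ((m:ℤ) - ((n:ℤ)-1)).natAbs = 1 from by omega]
    ring
  · -- n < m ≤ 2n
    rw [if_pos h2n,
      show ((m:ℤ) - n).natAbs = (m-n-1)+1 from by omega,
      key_succ n (m-n-1) hn,
      if_pos hm2,
      if_pos (show m - 2 < 2*n-1 from by omega),
      show (((m-2 : ℕ):ℤ) - ((n:ℤ)-1)).natAbs = m-n-1 from by omega,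
      if_pos hm]
    rcases Nat.lt_or_ge m (2*n-1) with hc | hc
    · -- m ≤ 2n-2
      rw [if_pos (show m - 1 < 2*n-1 from by omega),
        show (((m-1 : ℕ):ℤ) - ((n:ℤ)-1)).natAbs = (m-n-1)+1 from by omega,
        if_pos hc,
        show ((m:ℤ) - ((n:ℤ)-1)).natAbs = (m-n-1)+2 from by omega]
      ring
    rcases Nat.lt_or_ge m (2*n) with hc2 | hc2
    · -- m = 2n-1
      rw [if_pos (show m - 1 < 2*n-1 from by omega),
        show (((m-1 : ℕ):ℤ) - ((n:ℤ)-1)).natAbs = (m-n-1)+1 from by omega,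
        if_neg (show ¬ (m < 2*n-1) from by omega),
        hz (m-n-1+2) (by omega)]
      try ring
    · -- m = 2n
      rw [if_neg (show ¬ (m - 1 < 2*n-1) from by omega),
        if_neg (show ¬ (m < 2*n-1) from by omega),
        hz (m-n-1+2) (by omega), hz (m-n-1+1) (by omega)]
      ring


lemma aSet_singleton (p i : ℕ) (h1 : p ≤ i) (h2 : i ≤ p+1) : aSet (p+2) i = {p+2} := by
  ext d
  simp only [aSet, Finset.mem_filter, Nat.mem_divisors, Finset.mem_singleton]
  constructor
  · rintro ⟨⟨hdvd, hne⟩, hcond⟩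
    obtain ⟨e, he, he1, hd1⟩ := eDiv (p+2) d (by omega) hdvd
    rw [he, cond_iff d e i hd1] at hcond
    obtain ⟨hc1, hc2⟩ := hcond
    rcases Nat.lt_or_ge e 2 with hh | hh
    · have he' : e = 1 := by omega
      rw [he', Nat.mul_one] at he
      omega
    · exfalso
      have h2d : 2*d ≤ d*e := by nlinarith
      omega
  · rintro rfl
    refine ⟨⟨dvd_refl _, by omega⟩, ?_, ?_⟩ <;> nlinarith


theorem Cpoly_eq_sq_mul_divisor_counts (n : ℕ) (hn : 1 ≤ n) :
    Cpoly n = (Polynomial.X - 1) ^ 2 *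
        ∑ j ∈ Finset.range (2 * n - 1),
          Polynomial.C ((aCoeff n ((j : ℤ) - ((n : ℤ) - 1)).natAbs : ℤ)) * Polynomial.X ^ j ∧
      (2 ≤ n → aCoeff n (n - 1) = 1 ∧ aCoeff n (n - 2) = 1) := by
  constructor
  · have hmain := main_poly n hn
    have hBs : (∑ j ∈ Finset.range (2 * n - 1),
        Polynomial.C ((aCoeff n ((j : ℤ) - ((n : ℤ) - 1)).natAbs : ℤ)) * Polynomial.X ^ j)
        = B n := by
      unfold B
      apply Finset.sum_congr rfl
      intro j _
      rw [aCoeff_eq]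
    rw [hBs]
    exact hmain
  · intro h2
    obtain ⟨p, rfl⟩ : ∃ p, n = p+2 := ⟨n-2, by omega⟩
    constructor
    · rw [aCoeff_eq, show p+2-1 = p+1 from rfl]
      unfold A
      rw [aSet_singleton p (p+1) (by omega) (by omega)]
      exact Finset.card_singleton _
    · rw [aCoeff_eq, show p+2-2 = p from rfl]
      unfold A
      rw [aSet_singleton p p (by omega) (by omega)]
      exact Finset.card_singleton _
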